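/- Let K be a field and q ∈ K a unit that is not a root of unity. Define [n]_q := (q^n − q^{−n})/(q − q^{−1}), [n]_q! := ∏_{l=1}^{n}[l]_q, and [n choose m]_q := [n]_q!/([m]_q!·[n−m]_q!). Let V be a finite-dimensional K-vector space, d ≥ 0, b ∈ K nonzero, and A, A* : V → V linear maps. Suppose V_i is the (b·q^{2i−d})-eigenspace of A for 0 ≤ i ≤ d, V = V_0 ⊕ ⋯ ⊕ V_d, and A* V_i ⊆ V_{i−1} + V_i + V_{i+1} for all i (with V_{−1} = V_{d+1} = 0). Then for every integer r ≥ 1, Lusztig's higher order q-Serre relation holds: Σ_{j=0}^{2r+1} (−1)^j·[2r+1 choose j]_q·A^{2r+1−j} ∘ (A*)^r ∘ A^j = 0 as a linear map on V. -/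

import Mathlib

/-- The q-integer `[n]_q = (q^n - q^{-n})/(q - q^{-1})`. -/
def qInt {K : Type*} [Field K] (q : K) (n : ℕ) : K :=
  (q ^ n - q⁻¹ ^ n) / (q - q⁻¹)

/-- The q-factorial `[n]_q! = ∏_{l=1}^n [l]_q`. -/
def qFact {K : Type*} [Field K] (q : K) (n : ℕ) : K :=
  ∏ l ∈ Finset.Icc 1 n, qInt q l

/-- The q-binomial coefficient `[n choose m]_q = [n]_q!/([m]_q! [n-m]_q!)`. -/
def qBinom {K : Type*} [Field K] (q : K) (n m : ℕ) : K :=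
  qFact q n / (qFact q m * qFact q (n - m))

open Polynomial Finset

section scalars
variable {K : Type*} [Field K] {q : K}

lemma qFact_zero : qFact q 0 = 1 := by simp [qFact]

lemma qFact_succ (n : ℕ) : qFact q (n+1) = qFact q n * qInt q (n+1) := by
  rw [qFact, qFact, Finset.prod_Icc_succ_top (by omega : 1 ≤ n+1)]

lemma hq2 (hq : q ≠ 0) (hqroot : ∀ n : ℕ, 0 < n → q ^ n ≠ 1) : q - q⁻¹ ≠ 0 := by
  intro h
  have h1 : q = q⁻¹ := sub_eq_zero.mp h
  have : q ^ 2 = 1 := by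
    rw [pow_two]; nth_rewrite 2 [h1]; exact mul_inv_cancel₀ hq
  exact hqroot 2 (by norm_num) this

lemma qInt_ne_zero (hq : q ≠ 0) (hqroot : ∀ n : ℕ, 0 < n → q ^ n ≠ 1)
    (l : ℕ) (hl : 1 ≤ l) : qInt q l ≠ 0 := by
  rw [qInt]
  apply div_ne_zero _ (hq2 hq hqroot)
  intro h
  have h1 : q ^ l = q⁻¹ ^ l := sub_eq_zero.mp h
  have h2 : q ^ (2*l) = 1 := by
    have : q ^ l * q ^ l = q⁻¹ ^ l * q ^ l := by rw [← h1]
    rw [inv_pow, inv_mul_cancel₀ (pow_ne_zero _ hq)] at this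
    calc q ^ (2*l) = q ^ l * q ^ l := by rw [two_mul, pow_add]
    _ = 1 := this
  exact hqroot (2*l) (by omega) h2

lemma qFact_ne_zero (hq : q ≠ 0) (hqroot : ∀ n : ℕ, 0 < n → q ^ n ≠ 1)
    (n : ℕ) : qFact q n ≠ 0 :=
  Finset.prod_ne_zero_iff.mpr fun l hl => qInt_ne_zero hq hqroot l (Finset.mem_Icc.mp hl).1

lemma qBinom_zero (hq : q ≠ 0) (hqroot : ∀ n : ℕ, 0 < n → q ^ n ≠ 1) (n : ℕ) :
    qBinom q n 0 = 1 := by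
  rw [qBinom, qFact_zero, one_mul, Nat.sub_zero, div_self (qFact_ne_zero hq hqroot n)]

lemma qBinom_self (hq : q ≠ 0) (hqroot : ∀ n : ℕ, 0 < n → q ^ n ≠ 1) (n : ℕ) :
    qBinom q n n = 1 := by
  rw [qBinom, Nat.sub_self, qFact_zero, mul_one, div_self (qFact_ne_zero hq hqroot n)]

lemma qInt_add (hq : q ≠ 0) (hqroot : ∀ n : ℕ, 0 < n → q ^ n ≠ 1) (m p : ℕ) :
    qInt q (m + p + 2) = q⁻¹ ^ (m+1) * qInt q (p+1) + q ^ (p+1) * qInt q (m+1) := by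
  rw [qInt, qInt, qInt, ← mul_div_assoc, ← mul_div_assoc, ← add_div]
  congr 1
  rw [show (m + p + 2) = (m + 1) + (p + 1) by omega, pow_add, pow_add]
  ring

lemma qBinom_pascal (hq : q ≠ 0) (hqroot : ∀ n : ℕ, 0 < n → q ^ n ≠ 1) (m p : ℕ) :
    qBinom q (m + p + 2) (m + 1) =
      q⁻¹ ^ (m+1) * qBinom q (m + p + 1) (m + 1) + q ^ (p+1) * qBinom q (m + p + 1) m := by
  rw [qBinom, qBinom, qBinom]
  rw [show (m + p + 2) - (m + 1) = p + 1 by omega,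
      show (m + p + 1) - (m + 1) = p by omega,
      show (m + p + 1) - m = p + 1 by omega,
      show (m + p + 2) = (m + p + 1) + 1 by omega]
  rw [qFact_succ (m + p + 1), show (m + p + 1) + 1 = m + p + 2 by omega,
      qInt_add hq hqroot m p, qFact_succ m, qFact_succ p, inv_pow]
  have h1 := qFact_ne_zero hq hqroot m
  have h2 := qFact_ne_zero hq hqroot p
  have h3 := qInt_ne_zero hq hqroot (m+1) (by omega)
  have h4 := qInt_ne_zero hq hqroot (p+1) (by omega)
  have h5 : q ^ (m+1) ≠ 0 := pow_ne_zero _ hq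
  have h6 : q ^ (p+1) ≠ 0 := pow_ne_zero _ hq
  generalize hc : q⁻¹ = c
  field_simp

lemma prod_eq (hq : q ≠ 0) (hqroot : ∀ n : ℕ, 0 < n → q ^ n ≠ 1) (n : ℕ) (t : K) :
    ∏ l ∈ Finset.range n, (X - C (q⁻¹^(n-1) * q^(2*l) * t)) =
    ∑ j ∈ Finset.range (n+1), C ((-1)^j * qBinom q n j * t^j) * X^(n-j) := by
  induction n generalizing t with
  | zero => simp [qBinom_zero hq hqroot 0]
  | succ n ih =>
    have hstep : ∏ l ∈ Finset.range (n+1), (X - C (q⁻¹^(n+1-1) * q^(2*l) * t))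
        = (∏ l ∈ Finset.range n, (X - C (q⁻¹^(n-1) * q^(2*l) * (q⁻¹ * t)))) * (X - C (q^n * t)) := by
      rw [Finset.prod_range_succ]
      congr 1
      · apply Finset.prod_congr rfl
        intro l hl
        have hn : 1 ≤ n := by have := Finset.mem_range.mp hl; omega
        congr 1
        rw [show n + 1 - 1 = (n-1)+1 by omega, pow_succ]
        ring
      · congr 1
        rw [show n + 1 - 1 = n from rfl, two_mul, pow_add, inv_pow, ← mul_assoc,
          inv_mul_cancel₀ (pow_ne_zero _ hq), one_mul]
    rw [hstep, ih, mul_sub, Finset.sum_mul, Finset.sum_mul]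
    rw [Finset.sum_range_succ']
    rw [Finset.sum_range_succ]
    rw [Finset.sum_range_succ (fun j => C ((-1)^j * qBinom q (n+1) j * t^j) * X^(n+1-j)) (n+1)]
    rw [Finset.sum_range_succ']
    have hm : ∀ l ∈ Finset.range n,
        C ((-1)^(l+1) * qBinom q n (l+1) * (q⁻¹*t)^(l+1)) * X^(n-(l+1)) * X -
          C ((-1)^l * qBinom q n l * (q⁻¹*t)^l) * X^(n-l) * C (q^n * t)
        = C ((-1)^(l+1) * qBinom q (n+1) (l+1) * t^(l+1)) * X^(n+1-(l+1)) := by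
      intro l hl
      have hl' : l < n := Finset.mem_range.mp hl
      have hs : (-1:K)^(l+1) * qBinom q n (l+1) * (q⁻¹*t)^(l+1) -
          ((-1)^l * qBinom q n l * (q⁻¹*t)^l) * (q^n * t)
          = (-1)^(l+1) * qBinom q (n+1) (l+1) * t^(l+1) := by
        have hpas := qBinom_pascal hq hqroot l (n-1-l)
        rw [show l+(n-1-l)+2 = n+1 by omega, show l+(n-1-l)+1 = n by omega,
          show (n-1-l)+1 = n-l by omega] at hpas
        rw [hpas]
        have hqn : (q:K)^n = q^(n-l) * q^l := by rw [← pow_add]; congr 1; omega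
        have hc : (q:K)⁻¹^l * q^l = 1 := by
          rw [inv_pow]; exact inv_mul_cancel₀ (pow_ne_zero _ hq)
        rw [hqn, mul_pow, mul_pow]
        linear_combination ((-1:K)^(l+1) * t^(l+1) * q^(n-l) * qBinom q n l) * hc
      rw [show n+1-(l+1) = n-l by omega, mul_assoc, ← pow_succ, show n-(l+1)+1 = n-l by omega]
      calc C ((-1)^(l+1) * qBinom q n (l+1) * (q⁻¹*t)^(l+1)) * X^(n-l) -
          C ((-1)^l * qBinom q n l * (q⁻¹*t)^l) * X^(n-l) * C (q^n * t)
          = C ((-1)^(l+1) * qBinom q n (l+1) * (q⁻¹*t)^(l+1) -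
              ((-1)^l * qBinom q n l * (q⁻¹*t)^l) * (q^n * t)) * X^(n-l) := by
            rw [mul_right_comm (C ((-1:K)^l * qBinom q n l * (q⁻¹*t)^l)) (X^(n-l)) (C (q^n*t)),
              ← C_mul, ← sub_mul, ← C_sub]
        _ = _ := by rw [hs]
    have hS : (∑ l ∈ Finset.range n, C ((-1)^(l+1) * qBinom q n (l+1) * (q⁻¹*t)^(l+1)) * X^(n-(l+1)) * X)
        - ∑ l ∈ Finset.range n, C ((-1)^l * qBinom q n l * (q⁻¹*t)^l) * X^(n-l) * C (q^n * t)
        = ∑ l ∈ Finset.range n, C ((-1)^(l+1) * qBinom q (n+1) (l+1) * t^(l+1)) * X^(n+1-(l+1)) := by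
      rw [← Finset.sum_sub_distrib]
      exact Finset.sum_congr rfl hm
    have htop : C ((-1:K)^0 * qBinom q n 0 * (q⁻¹*t)^0) * X^(n-0) * X
        = C ((-1:K)^0 * qBinom q (n+1) 0 * t^0) * X^(n+1-0) := by
      rw [qBinom_zero hq hqroot, qBinom_zero hq hqroot]
      simp [pow_succ]
    have hbot : C ((-1:K)^n * qBinom q n n * (q⁻¹*t)^n) * X^(n-n) * C (q^n * t)
        = - (C ((-1:K)^(n+1) * qBinom q (n+1) (n+1) * t^(n+1)) * X^(n+1-(n+1))) := by
      rw [qBinom_self hq hqroot, qBinom_self hq hqroot]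
      have hc : (q:K)⁻¹^n * q^n = 1 := by
        rw [inv_pow]; exact inv_mul_cancel₀ (pow_ne_zero _ hq)
      simp only [Nat.sub_self, pow_zero, mul_one, mul_pow, ← C_mul, ← C_neg]
      congr 1
      linear_combination ((-1:K)^n * t^(n+1)) * hc
    linear_combination hS + htop - hbot

end scalars

section la
variable {K V : Type*} [Field K] [AddCommGroup V] [Module K V]
variable (q b : K) (d : ℕ) (A : Module.End K V)

/-- auxiliary family of submodules indexed by ℤ -/
def Wsp (i : ℤ) : Submodule K V :=
  if 0 ≤ i ∧ i ≤ (d:ℤ) then Module.End.eigenspace A (b * q ^ (2 * i - (d:ℤ))) else ⊥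

lemma Wsp_le (i : ℤ) : Wsp q b d A i ≤ Module.End.eigenspace A (b * q ^ (2 * i - (d:ℤ))) := by
  rw [Wsp]; split
  · exact le_rfl
  · exact bot_le

lemma Wsp_eq (i : ℤ) (h1 : 0 ≤ i) (h2 : i ≤ (d:ℤ)) :
    Wsp q b d A i = Module.End.eigenspace A (b * q ^ (2 * i - (d:ℤ))) := if_pos ⟨h1, h2⟩

lemma eig_pow {A : Module.End K V} {μ : K} {v : V} (hv : A v = μ • v) (j : ℕ) :
    (A ^ j) v = μ ^ j • v := by
  induction j with
  | zero => simp
  | succ j ih =>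
    rw [pow_succ, Module.End.mul_apply, hv, map_smul, ih, smul_smul, ← pow_succ']

lemma kill (s : Finset ℤ) :
    s.sup (Wsp q b d A) ≤
      LinearMap.ker (Polynomial.aeval A (∏ k ∈ s, (X - C (b * q ^ (2 * k - (d:ℤ)))))) := by
  apply Finset.sup_le
  intro k hk v hv
  rw [LinearMap.mem_ker, ← Finset.prod_erase_mul s _ hk, map_mul, Module.End.mul_apply]
  have h0 : (Polynomial.aeval A) (X - C (b * q ^ (2 * k - (d:ℤ)))) v = 0 := by
    rw [map_sub, aeval_X, aeval_C, LinearMap.sub_apply,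
      Module.End.mem_eigenspace_iff.mp (Wsp_le q b d A k hv),
      Module.algebraMap_end_apply, sub_self]
  rw [h0, map_zero]

variable (Astar : Module.End K V)

lemma tri' (htri : ∀ i, i ≤ d →
      Submodule.map Astar (Module.End.eigenspace A (b * q ^ (2 * (i : ℤ) - (d : ℤ)))) ≤
      (if i = 0 then ⊥ else Module.End.eigenspace A (b * q ^ (2 * ((i : ℤ) - 1) - (d : ℤ))))
        ⊔ Module.End.eigenspace A (b * q ^ (2 * (i : ℤ) - (d : ℤ)))
        ⊔ (if i = d then ⊥ else
            Module.End.eigenspace A (b * q ^ (2 * ((i : ℤ) + 1) - (d : ℤ))))) (i : ℤ) :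
    Submodule.map Astar (Wsp q b d A i) ≤
      Wsp q b d A (i-1) ⊔ Wsp q b d A i ⊔ Wsp q b d A (i+1) := by
  by_cases hi : 0 ≤ i ∧ i ≤ (d:ℤ)
  · lift i to ℕ using hi.1 with m
    have hm : m ≤ d := by exact_mod_cast hi.2
    rw [Wsp_eq q b d A _ hi.1 hi.2]
    refine le_trans (htri m hm) (sup_le_sup (sup_le_sup ?_ ?_) ?_)
    · split
      · exact bot_le
      · rename_i h0
        rw [Wsp_eq q b d A _ (by omega) (by omega)]
    · exact le_rfl
    · split
      · exact bot_le
      · rename_i h0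
        rw [Wsp_eq q b d A _ (by omega) (by omega)]
  · have : Wsp q b d A i = ⊥ := if_neg hi
    rw [this, Submodule.map_bot]
    exact bot_le

lemma pow_map (htri : ∀ i, i ≤ d →
      Submodule.map Astar (Module.End.eigenspace A (b * q ^ (2 * (i : ℤ) - (d : ℤ)))) ≤
      (if i = 0 then ⊥ else Module.End.eigenspace A (b * q ^ (2 * ((i : ℤ) - 1) - (d : ℤ))))
        ⊔ Module.End.eigenspace A (b * q ^ (2 * (i : ℤ) - (d : ℤ)))
        ⊔ (if i = d then ⊥ else
            Module.End.eigenspace A (b * q ^ (2 * ((i : ℤ) + 1) - (d : ℤ)))))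
    (r : ℕ) (i : ℤ) :
    Submodule.map (Astar ^ r) (Wsp q b d A i) ≤
      (Finset.Icc (i - (r:ℤ)) (i + (r:ℤ))).sup (Wsp q b d A) := by
  induction r generalizing i with
  | zero =>
    rw [pow_zero]
    have : Submodule.map (1 : Module.End K V) (Wsp q b d A i) = Wsp q b d A i := by
      rw [Module.End.one_eq_id, Submodule.map_id]
    rw [this]
    exact Finset.le_sup (by simp)
  | succ r ih =>
    rw [pow_succ, Module.End.mul_eq_comp, Submodule.map_comp]
    refine le_trans (Submodule.map_mono (tri' q b d A Astar htri i)) ?_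
    rw [Submodule.map_sup, Submodule.map_sup]
    refine sup_le (sup_le ?_ ?_) ?_ <;>
      refine le_trans (ih _) (Finset.sup_mono
        (Finset.Icc_subset_Icc (by push_cast; omega) (by push_cast; omega)))

end la

/-- Lusztig's higher order q-Serre relations for a tridiagonal pair with
eigenvalues `b q^(2i-d)` (the case `ρ₀ = 0`):
`Σ_{j=0}^{2r+1} (-1)^j [2r+1 choose j]_q A^{2r+1-j} (A*)^r A^j = 0`. -/
theorem stmt15 (K V : Type*) [Field K] [AddCommGroup V] [Module K V] [FiniteDimensional K V]
    (q : K) (hq : q ≠ 0) (hqroot : ∀ n : ℕ, 0 < n → q ^ n ≠ 1)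
    (d : ℕ) (b : K) (hb : b ≠ 0) (A Astar : Module.End K V)
    (hsum : DirectSum.IsInternal
      (fun i : Fin (d + 1) => Module.End.eigenspace A (b * q ^ (2 * (i.1 : ℤ) - (d : ℤ)))))
    (htri : ∀ i, i ≤ d →
      Submodule.map Astar (Module.End.eigenspace A (b * q ^ (2 * (i : ℤ) - (d : ℤ)))) ≤
      (if i = 0 then ⊥ else Module.End.eigenspace A (b * q ^ (2 * ((i : ℤ) - 1) - (d : ℤ))))
        ⊔ Module.End.eigenspace A (b * q ^ (2 * (i : ℤ) - (d : ℤ)))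
        ⊔ (if i = d then ⊥ else
            Module.End.eigenspace A (b * q ^ (2 * ((i : ℤ) + 1) - (d : ℤ))))) :
    ∀ r : ℕ, 1 ≤ r →
      ∑ j ∈ Finset.range (2 * r + 2),
        ((-1 : K) ^ j * qBinom q (2 * r + 1) j) •
          (A ^ (2 * r + 1 - j) * Astar ^ r * A ^ j) = 0 := by
  intro r hr
  apply LinearMap.ker_eq_top.mp
  rw [eq_top_iff, ← hsum.submodule_iSup_eq_top]
  apply iSup_le
  intro i v hv
  rw [LinearMap.mem_ker]
  set θ : K := b * q ^ (2 * (i.1:ℤ) - (d:ℤ)) with hθ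
  have hAv : A v = θ • v := Module.End.mem_eigenspace_iff.mp hv
  have hvW : v ∈ Wsp q b d A (i.1:ℤ) := by
    rw [Wsp_eq q b d A _ (Int.natCast_nonneg _) (by exact_mod_cast Nat.lt_succ_iff.mp i.2)]
    exact hv
  have hw : (Astar ^ r) v ∈ (Finset.Icc ((i.1:ℤ) - r) ((i.1:ℤ) + r)).sup (Wsp q b d A) :=
    pow_map q b d A Astar htri r (i.1:ℤ) ⟨v, hvW, rfl⟩
  have hkill := kill q b d A (Finset.Icc ((i.1:ℤ) - r) ((i.1:ℤ) + r)) hw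
  rw [LinearMap.mem_ker] at hkill
  have hreindex : ∏ l ∈ Finset.range (2*r+1), (X - Polynomial.C (q⁻¹^(2*r+1-1) * q^(2*l) * θ))
      = ∏ k ∈ Finset.Icc ((i.1:ℤ) - r) ((i.1:ℤ) + r),
          (X - Polynomial.C (b * q ^ (2*k - (d:ℤ)))) := by
    refine Finset.prod_bij' (fun l _ => (i.1:ℤ) + l - r) (fun k _ => (k - (i.1:ℤ) + r).toNat)
      ?_ ?_ ?_ ?_ ?_
    · intro a ha; simp only [Finset.mem_Icc]; have := Finset.mem_range.mp ha; omega
    · intro a ha; simp only [Finset.mem_range]; rw [Finset.mem_Icc] at ha; omega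
    · intro a ha; have := Finset.mem_range.mp ha; omega
    · intro a ha; rw [Finset.mem_Icc] at ha; omega
    · intro l hl
      congr 2
      have h1 : (q:K)⁻¹^(2*r+1-1) = q ^ (-(2*r:ℕ) : ℤ) := by
        rw [show 2*r+1-1 = 2*r from rfl, inv_pow, ← zpow_natCast q (2*r), ← zpow_neg]
      have h2 : (q:K)^(2*l) = q ^ ((2*l:ℕ) : ℤ) := by rw [zpow_natCast]
      rw [h1, h2, hθ]
      rw [show (2*((i.1:ℤ) + l - r) - d) = (-(2*r:ℕ):ℤ) + ((2*l:ℕ):ℤ) + (2*(i.1:ℤ) - d)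
        by push_cast; ring]
      rw [zpow_add₀ hq, zpow_add₀ hq]
      ring
  have hstep1 : (∑ j ∈ Finset.range (2*r+2), ((-1:K)^j * qBinom q (2*r+1) j) •
        (A^(2*r+1-j) * Astar^r * A^j)) v
      = ∑ j ∈ Finset.range (2*r+1+1),
          ((-1:K)^j * qBinom q (2*r+1) j * θ^j) • ((A^(2*r+1-j)) ((Astar^r) v)) := by
    rw [LinearMap.sum_apply]
    refine Finset.sum_congr rfl fun j _ => ?_
    rw [LinearMap.smul_apply, Module.End.mul_apply, Module.End.mul_apply, eig_pow hAv j,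
      map_smul, map_smul, smul_smul]
  have hstep2 : ∑ j ∈ Finset.range (2*r+1+1),
        ((-1:K)^j * qBinom q (2*r+1) j * θ^j) • ((A^(2*r+1-j)) ((Astar^r) v))
      = (Polynomial.aeval A (∑ j ∈ Finset.range (2*r+1+1),
          Polynomial.C ((-1:K)^j * qBinom q (2*r+1) j * θ^j) * X^(2*r+1-j))) ((Astar^r) v) := by
    rw [map_sum, LinearMap.sum_apply]
    refine Finset.sum_congr rfl fun j _ => ?_
    rw [map_mul, Polynomial.aeval_C, Polynomial.aeval_X_pow, Module.End.mul_apply,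
      Module.algebraMap_end_apply]
  rw [hstep1, hstep2, ← prod_eq hq hqroot (2*r+1) θ, hreindex]
  exact hkill
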